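/- Let q₁, q₂ ∈ ℂ with q₁ ≠ 0, q₁ ≠ 1/4 and q₂ ≠ 0, and let f(u₁,u₂) = u₁ + u₂ + q₁u₂²/u₁ + q₂/u₂ on (ℂ*)². Then the set of critical points of f, i.e. the set of (u₁,u₂) with u₁ ≠ 0, u₂ ≠ 0 satisfying 1 − q₁u₂²/u₁² = 0 and 1 + 2q₁u₂/u₁ − q₂/u₂² = 0, has exactly four elements, and at each of these points the Hessian determinant (∂²f/∂u₁²)(∂²f/∂u₂²) − (∂²f/∂u₁∂u₂)² = (2q₁u₂²/u₁³)(2q₁/u₁ + 2q₂/u₂³) − (2q₁u₂/u₁²)² is nonzero. -/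

import Mathlib

/-- Tameness lemma of section 9.2.1: for `q₁ ∉ {0, 1/4}` and `q₂ ≠ 0` the
Landau–Ginzburg potential of `𝔽₂` has exactly four critical points on the
torus, all of them non-degenerate. -/
theorem hirzebruch_critical_points
    (q₁ q₂ : ℂ) (hq₁ : q₁ ≠ 0) (hq₁' : q₁ ≠ 1 / 4) (hq₂ : q₂ ≠ 0) :
    Set.ncard {p : ℂ × ℂ | p.1 ≠ 0 ∧ p.2 ≠ 0 ∧
        1 - q₁ * p.2 ^ 2 / p.1 ^ 2 = 0 ∧
        1 + 2 * q₁ * p.2 / p.1 - q₂ / p.2 ^ 2 = 0} = 4 ∧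
    ∀ p : ℂ × ℂ, p.1 ≠ 0 → p.2 ≠ 0 →
      1 - q₁ * p.2 ^ 2 / p.1 ^ 2 = 0 →
      1 + 2 * q₁ * p.2 / p.1 - q₂ / p.2 ^ 2 = 0 →
      (2 * q₁ * p.2 ^ 2 / p.1 ^ 3) * (2 * q₁ / p.1 + 2 * q₂ / p.2 ^ 3)
        - (2 * q₁ * p.2 / p.1 ^ 2) ^ 2 ≠ 0 := by
  constructor
  · -- the critical point count
    obtain ⟨ε, hε⟩ : ∃ z : ℂ, z ^ 2 = q₁ := IsAlgClosed.exists_pow_nat_eq q₁ (by norm_num)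
    have hεne : ε ≠ 0 := by
      rintro rfl; exact hq₁ (by simpa using hε.symm)
    have h1p : (1 : ℂ) + 2 * ε ≠ 0 := by
      intro h
      apply hq₁'
      have hε2 : ε = -(1/2) := by linear_combination h / 2
      rw [← hε, hε2]; norm_num
    have h1m : (1 : ℂ) - 2 * ε ≠ 0 := by
      intro h
      apply hq₁'
      have hε2 : ε = 1/2 := by linear_combination -h / 2
      rw [← hε, hε2]; norm_num
    obtain ⟨w, hw⟩ : ∃ z : ℂ, z ^ 2 = q₂ / (1 + 2 * ε) :=
      IsAlgClosed.exists_pow_nat_eq _ (by norm_num)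
    obtain ⟨v, hv⟩ : ∃ z : ℂ, z ^ 2 = q₂ / (1 - 2 * ε) :=
      IsAlgClosed.exists_pow_nat_eq _ (by norm_num)
    have hw' : w ^ 2 * (1 + 2 * ε) = q₂ := by rw [hw, div_mul_cancel₀ _ h1p]
    have hv' : v ^ 2 * (1 - 2 * ε) = q₂ := by rw [hv, div_mul_cancel₀ _ h1m]
    have hwne : w ≠ 0 := by
      rintro rfl; apply hq₂; rw [← hw']; ring
    have hvne : v ≠ 0 := by
      rintro rfl; apply hq₂; rw [← hv']; ring
    have hwv2 : w ^ 2 ≠ v ^ 2 := by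
      intro h
      have h4ε : w ^ 2 * (4 * ε) = 0 := by linear_combination hw' - hv' - (1 - 2 * ε) * h
      rcases mul_eq_zero.mp h4ε with h' | h'
      · exact hwne (pow_eq_zero_iff (by norm_num) |>.mp h')
      · exact hεne (by linear_combination h' / 4)
    have hww : w ≠ -w := fun h => hwne (by linear_combination h / 2)
    have hvv : v ≠ -v := fun h => hvne (by linear_combination h / 2)
    have hwv : w ≠ v := fun h => hwv2 (by rw [h])
    have hwv' : w ≠ -v := fun h => hwv2 (by rw [h]; ring)
    -- generic membership lemma: all four points have the form (a*b, b)
    have memgen : ∀ a b : ℂ, a ≠ 0 → b ≠ 0 → a ^ 2 = q₁ → b ^ 2 * (1 + 2 * a) = q₂ →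
        (a * b ≠ 0 ∧ b ≠ 0 ∧ 1 - q₁ * b ^ 2 / (a * b) ^ 2 = 0 ∧
          1 + 2 * q₁ * b / (a * b) - q₂ / b ^ 2 = 0) := by
      intro a b ha hb ha2 hb2
      refine ⟨mul_ne_zero ha hb, hb, ?_, ?_⟩
      · field_simp
        linear_combination ha2
      · field_simp
        linear_combination a * hb2 - 2 * b ^ 2 * ha2
    have hset : {p : ℂ × ℂ | p.1 ≠ 0 ∧ p.2 ≠ 0 ∧
        1 - q₁ * p.2 ^ 2 / p.1 ^ 2 = 0 ∧
        1 + 2 * q₁ * p.2 / p.1 - q₂ / p.2 ^ 2 = 0} =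
        {(ε * w, w), (-(ε * w), -w), (-(ε * v), v), (ε * v, -v)} := by
      ext ⟨u₁, u₂⟩
      simp only [Set.mem_setOf_eq, Set.mem_insert_iff, Set.mem_singleton_iff, Prod.mk.injEq]
      constructor
      · rintro ⟨h1, h2, h3, h4⟩
        field_simp at h3 h4
        -- h3 : u₁ ^ 2 - q₁ * u₂ ^ 2 = 0
        -- h4 : (u₁ + 2 * q₁ * u₂) * u₂ ^ 2 - u₁ * q₂ = 0
        have hfac : (u₁ - ε * u₂) * (u₁ + ε * u₂) = 0 := by
          linear_combination h3 - u₂ ^ 2 * hε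
        rcases mul_eq_zero.mp hfac with h | h
        · have hu1 : u₁ = ε * u₂ := by linear_combination h
          subst hu1
          have h5' : (u₂ ^ 2 * (1 + 2 * ε)) * (ε * u₂) = q₂ * (ε * u₂) := by
            linear_combination h4 + 2 * u₂ ^ 3 * hε
          have h5 : u₂ ^ 2 * (1 + 2 * ε) = q₂ := mul_right_cancel₀ (mul_ne_zero hεne h2) h5'
          have h6 : u₂ ^ 2 = w ^ 2 := mul_right_cancel₀ h1p (h5.trans hw'.symm)
          have hfac2 : (u₂ - w) * (u₂ + w) = 0 := by linear_combination h6
          rcases mul_eq_zero.mp hfac2 with h' | h'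
          · have hww' : u₂ = w := by linear_combination h'
            exact Or.inl ⟨by rw [hww'], hww'⟩
          · have hww' : u₂ = -w := by linear_combination h'
            exact Or.inr (Or.inl ⟨by rw [hww']; ring, hww'⟩)
        · have hu1 : u₁ = -(ε * u₂) := by linear_combination h
          subst hu1
          have h5' : (u₂ ^ 2 * (1 - 2 * ε)) * (ε * u₂) = q₂ * (ε * u₂) := by
            linear_combination -h4 - 2 * u₂ ^ 3 * hε
          have h5 : u₂ ^ 2 * (1 - 2 * ε) = q₂ := mul_right_cancel₀ (mul_ne_zero hεne h2) h5'
          have h6 : u₂ ^ 2 = v ^ 2 := mul_right_cancel₀ h1m (h5.trans hv'.symm)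
          have hfac2 : (u₂ - v) * (u₂ + v) = 0 := by linear_combination h6
          rcases mul_eq_zero.mp hfac2 with h' | h'
          · have hvv' : u₂ = v := by linear_combination h'
            exact Or.inr (Or.inr (Or.inl ⟨by rw [hvv'], hvv'⟩))
          · have hvv' : u₂ = -v := by linear_combination h'
            exact Or.inr (Or.inr (Or.inr ⟨by rw [hvv']; ring, hvv'⟩))
      · rintro (⟨he1, he2⟩ | ⟨he1, he2⟩ | ⟨he1, he2⟩ | ⟨he1, he2⟩) <;> rw [he1, he2]
        · exact memgen ε w hεne hwne hε hw'
        · rw [show -(ε * w) = ε * (-w) from by ring]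
          exact memgen ε (-w) hεne (neg_ne_zero.mpr hwne) hε (by linear_combination hw')
        · rw [show -(ε * v) = (-ε) * v from by ring]
          exact memgen (-ε) v (neg_ne_zero.mpr hεne) hvne (by linear_combination hε)
            (by linear_combination hv')
        · rw [show ε * v = (-ε) * (-v) from by ring]
          exact memgen (-ε) (-v) (neg_ne_zero.mpr hεne) (neg_ne_zero.mpr hvne)
            (by linear_combination hε) (by linear_combination hv')
    rw [hset]
    have hd1 : ((ε * w, w) : ℂ × ℂ) ∉ ({(-(ε * w), -w), (-(ε * v), v), (ε * v, -v)} :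
        Set (ℂ × ℂ)) := by
      simp only [Set.mem_insert_iff, Set.mem_singleton_iff, Prod.mk.injEq, not_or]
      exact ⟨fun h => hww h.2, fun h => hwv h.2, fun h => hwv' h.2⟩
    have hd2 : ((-(ε * w), -w) : ℂ × ℂ) ∉ ({(-(ε * v), v), (ε * v, -v)} : Set (ℂ × ℂ)) := by
      simp only [Set.mem_insert_iff, Set.mem_singleton_iff, Prod.mk.injEq, not_or]
      constructor
      · intro h; exact hwv' (by linear_combination -h.2)
      · intro h; exact hwv (by linear_combination -h.2)
    have hd3 : ((-(ε * v), v) : ℂ × ℂ) ∉ ({(ε * v, -v)} : Set (ℂ × ℂ)) := by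
      simp only [Set.mem_singleton_iff, Prod.mk.injEq, not_and]
      intro _ h; exact hvv h
    rw [Set.ncard_insert_of_notMem hd1, Set.ncard_insert_of_notMem hd2,
      Set.ncard_insert_of_notMem hd3, Set.ncard_singleton]
  · -- non-degeneracy: the Hessian equals 4 q₁ q₂ / (u₁³ u₂) ≠ 0
    intro p h1 h2 _ _ hcon
    field_simp at hcon
    have hz : (4 : ℂ) * q₁ * q₂ * p.1 ^ 5 * p.2 ^ 2 = 0 := by linear_combination p.1 ^ 4 * p.2 ^ 2 * hcon
    simp only [mul_eq_zero] at hz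
    rcases hz with ((((h | h) | h) | h) | h)
    · norm_num at h
    · exact hq₁ h
    · exact hq₂ h
    · exact h1 (pow_eq_zero_iff (by norm_num) |>.mp h)
    · exact h2 (pow_eq_zero_iff (by norm_num) |>.mp h)
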